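/- For n ≥ 2 and 0 < b < 1, the Lebesgue volume of the spherical cap region Cap_{n,b} = B_{n,1} ∩ { y : ||y - e_1||_2 ≤ a }, where a^2 = 2 - 2·sqrt(1 - b^2) (so the cap base has radius b), satisfies V(Cap_{n,b}) > (b/(4n)) · V(B_{n,b}), where B_{n,b} is the ball of radius b. -/

import Mathlib

open MeasureTheory

set_option maxHeartbeats 2000000 in
theorem cap_volume_lower_bound (n : ℕ) (hn : 2 ≤ n) (b : ℝ) (hb0 : 0 < b) (hb1 : b < 1) :
    volume (Metric.closedBall (0 : EuclideanSpace ℝ (Fin n)) 1 ∩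
        {y : EuclideanSpace ℝ (Fin n) |
          ‖y - EuclideanSpace.single (⟨0, by omega⟩ : Fin n) 1‖ ≤
            Real.sqrt (2 - 2 * Real.sqrt (1 - b ^ 2))}) >
      ENNReal.ofReal (b / (4 * n)) *
        volume (Metric.closedBall (0 : EuclideanSpace ℝ (Fin n)) b) := by
  classical
  obtain ⟨i0, hi0⟩ : ∃ i : Fin n, i = (⟨0, by omega⟩ : Fin n) := ⟨_, rfl⟩
  obtain ⟨N, hN⟩ : ∃ N : ℝ, N = (n:ℝ) := ⟨_, rfl⟩
  have hN2 : (2:ℝ) ≤ N := by rw [hN]; exact_mod_cast hn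
  have hNpos : (0:ℝ) < N := by linarith
  obtain ⟨θ, hθdef⟩ : ∃ θ : ℝ, θ = 1 - 1/(2*N) := ⟨_, rfl⟩
  have hθlow : (3/4 : ℝ) ≤ θ := by
    have h4 : (4:ℝ) ≤ 2*N := by linarith
    have : 1/(2*N) ≤ 1/4 := by
      apply div_le_div_of_nonneg_left (by norm_num) (by norm_num) h4
    rw [hθdef]; linarith
  have hθpos : (0:ℝ) < θ := by linarith
  have hθlt1 : θ < 1 := by
    have : (0:ℝ) < 1/(2*N) := by positivity
    rw [hθdef]; linarith
  obtain ⟨lam, hlam⟩ : ∃ lam : ℝ, lam = θ * (1 - θ) * b := ⟨_, rfl⟩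
  have hlampos : 0 < lam := by
    rw [hlam]; exact mul_pos (mul_pos hθpos (by linarith)) hb0
  obtain ⟨h, hh⟩ : ∃ h : ℝ, h = Real.sqrt (1 - b^2) := ⟨_, rfl⟩
  have hb2 : (0:ℝ) < 1 - b^2 := by nlinarith
  have hhsq : h^2 = 1 - b^2 := by rw [hh]; exact Real.sq_sqrt hb2.le
  have hh0 : 0 ≤ h := by rw [hh]; exact Real.sqrt_nonneg _
  have hh1 : h ≤ 1 - b^2/2 := by
    rw [hh]
    have h2 : (1:ℝ) - b^2 ≤ (1 - b^2/2)^2 := by nlinarith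
    calc Real.sqrt (1 - b^2) ≤ Real.sqrt ((1 - b^2/2)^2) := Real.sqrt_le_sqrt h2
      _ = 1 - b^2/2 := Real.sqrt_sq (by nlinarith)
  -- the diagonal linear map
  obtain ⟨d, hd⟩ : ∃ d : Fin n → ℝ, d = fun i => if i = i0 then lam else θ := ⟨_, rfl⟩
  let e := WithLp.linearEquiv 2 ℝ (Fin n → ℝ)
  obtain ⟨L, hL⟩ : ∃ L : EuclideanSpace ℝ (Fin n) →ₗ[ℝ] EuclideanSpace ℝ (Fin n),
      L = (e.symm : (Fin n → ℝ) →ₗ[ℝ] EuclideanSpace ℝ (Fin n)) ∘ₗ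
        Matrix.toLin' (Matrix.diagonal d) ∘ₗ (e : _ →ₗ[ℝ] _) := ⟨_, rfl⟩
  have hLdet : LinearMap.det L = lam * θ^(n-1) := by
    have h1 : L = (e.symm : (Fin n → ℝ) →ₗ[ℝ] _) ∘ₗ Matrix.toLin' (Matrix.diagonal d)
        ∘ₗ ((e.symm).symm : _ →ₗ[ℝ] _) := hL
    rw [h1, LinearMap.det_conj, LinearMap.det_toLin', Matrix.det_diagonal]
    rw [← Finset.mul_prod_erase _ _ (Finset.mem_univ i0)]
    have h2 : ∏ i ∈ Finset.univ.erase i0, d i = θ^(n-1) := by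
      rw [Finset.prod_congr rfl (fun i hi => ?_), Finset.prod_const,
        Finset.card_erase_of_mem (Finset.mem_univ i0), Finset.card_univ, Fintype.card_fin]
      · rw [hd]; simp only [if_neg (Finset.ne_of_mem_erase hi)]
    rw [h2, hd]; simp
  have happ : ∀ (y : EuclideanSpace ℝ (Fin n)) (i : Fin n), L y i = d i * y i := by
    intro y i
    rw [hL]
    simp [e, Matrix.toLin'_apply, Matrix.mulVec_diagonal]
  obtain ⟨c, hc⟩ : ∃ c : EuclideanSpace ℝ (Fin n),
      c = EuclideanSpace.single i0 (h + lam * b) := ⟨_, rfl⟩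
  -- the image is inside the cap
  have key : ∀ y ∈ Metric.closedBall (0 : EuclideanSpace ℝ (Fin n)) b,
      c + L y ∈ Metric.closedBall (0 : EuclideanSpace ℝ (Fin n)) 1 ∩
        {y : EuclideanSpace ℝ (Fin n) |
          ‖y - EuclideanSpace.single (⟨0, by omega⟩ : Fin n) 1‖ ≤
            Real.sqrt (2 - 2 * Real.sqrt (1 - b ^ 2))} := by
    intro y hy
    rw [Metric.mem_closedBall, dist_zero_right] at hy
    have hyb : ∑ i, (y i)^2 ≤ b^2 := by
      have h1 : ‖y‖^2 ≤ b^2 := by nlinarith [norm_nonneg y]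
      rw [EuclideanSpace.norm_eq, Real.sq_sqrt (by positivity)] at h1
      simpa [Real.norm_eq_abs, sq_abs] using h1
    obtain ⟨u, hu⟩ : ∃ u : ℝ, u = y i0 + b := ⟨_, rfl⟩
    obtain ⟨S, hS⟩ : ∃ S : ℝ, S = ∑ i ∈ Finset.univ.erase i0, (y i)^2 := ⟨_, rfl⟩
    have hsplit : (y i0)^2 + S ≤ b^2 := by
      have := Finset.add_sum_erase Finset.univ (fun i => (y i)^2) (Finset.mem_univ i0)
      rw [hS]
      simp only at this
      linarith [hyb, this.le, this.ge]
    have hS0 : 0 ≤ S := by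
      rw [hS]; exact Finset.sum_nonneg fun i _ => sq_nonneg _
    have hysq : (y i0)^2 ≤ b^2 := by linarith
    have hu0 : 0 ≤ u := by rw [hu]; nlinarith
    have hu2b : u ≤ 2*b := by rw [hu]; nlinarith
    -- key inequalities
    have hv0 : 0 ≤ lam * u := by positivity
    have hvle : lam * u ≤ b^2/2 := by
      have h1 : lam * u ≤ lam * (2*b) := mul_le_mul_of_nonneg_left hu2b hlampos.le
      have h2 : θ * (1-θ) ≤ 1/4 := by nlinarith [sq_nonneg (θ - 1/2)]
      rw [hlam] at h1
      nlinarith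
    have hSle : S ≤ 2*b*u - u^2 := by
      have h1 : (y i0)^2 = (u - b)^2 := by rw [hu]; ring
      nlinarith
    have h2' : 2*(lam*u) + θ^2*S ≤ b^2 := by
      have hid : 2*(lam*u) + θ^2*(2*b*u - u^2) = b^2 - (θ*u - b)^2 := by
        rw [hlam]; ring
      have h3 := mul_le_mul_of_nonneg_left hSle (sq_nonneg θ)
      nlinarith [sq_nonneg (θ*u - b)]
    have h3' : (h + lam*u)^2 ≤ h^2 + 2*(lam*u) := by
      nlinarith [mul_nonneg hv0 (show 0 ≤ 2 - 2*h - lam*u by nlinarith)]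
    have keyA : (h + lam*u)^2 + θ^2*S ≤ 1 := by nlinarith
    have keyB : (h + lam*u - 1)^2 + θ^2*S ≤ 2 - 2*h := by nlinarith
    -- coordinates of the image point
    have hz0 : (c + L y) i0 = h + lam*u := by
      rw [PiLp.add_apply, happ, hc, EuclideanSpace.single_apply, if_pos rfl, hd]
      simp only [if_pos]
      rw [hu]; ring
    have hzi : ∀ i, i ≠ i0 → (c + L y) i = θ * y i := by
      intro i hi
      rw [PiLp.add_apply, happ, hc, EuclideanSpace.single_apply, if_neg hi, hd]
      simp only [if_neg hi]
      ring
    constructor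
    · -- in unit ball
      rw [Metric.mem_closedBall, dist_zero_right, EuclideanSpace.norm_eq]
      have hsum : ∑ i, ‖(c + L y) i‖^2 = (h + lam*u)^2 + θ^2 * S := by
        rw [← Finset.add_sum_erase Finset.univ (fun i => ‖(c + L y) i‖^2) (Finset.mem_univ i0)]
        congr 1
        · rw [hz0, Real.norm_eq_abs, sq_abs]
        · rw [hS, Finset.mul_sum]
          refine Finset.sum_congr rfl fun i hi => ?_
          rw [hzi i (Finset.ne_of_mem_erase hi), Real.norm_eq_abs, sq_abs]
          ring
      rw [hsum]
      calc Real.sqrt ((h + lam*u)^2 + θ^2 * S) ≤ Real.sqrt 1 := Real.sqrt_le_sqrt keyA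
        _ = 1 := Real.sqrt_one
    · -- close to e1
      simp only [Set.mem_setOf_eq]
      rw [EuclideanSpace.norm_eq]
      obtain ⟨w, hw⟩ : ∃ w : EuclideanSpace ℝ (Fin n),
          w = c + L y - EuclideanSpace.single (⟨0, by omega⟩ : Fin n) 1 := ⟨_, rfl⟩
      rw [← hw]
      have hw0 : w i0 = h + lam*u - 1 := by
        rw [hw, PiLp.sub_apply, hz0, ← hi0, EuclideanSpace.single_apply, if_pos rfl]
      have hwi : ∀ i, i ≠ i0 → w i = θ * y i := by
        intro i hi
        rw [hw, PiLp.sub_apply, hzi i hi, ← hi0, EuclideanSpace.single_apply, if_neg hi, sub_zero]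
      have hsum : ∑ i, ‖w i‖^2 = (h + lam*u - 1)^2 + θ^2 * S := by
        rw [← Finset.add_sum_erase Finset.univ (fun i => ‖w i‖^2) (Finset.mem_univ i0)]
        congr 1
        · rw [hw0, Real.norm_eq_abs, sq_abs]
        · rw [hS, Finset.mul_sum]
          refine Finset.sum_congr rfl fun i hi => ?_
          rw [hwi i (Finset.ne_of_mem_erase hi), Real.norm_eq_abs, sq_abs]
          ring
      rw [hsum, ← hh]
      exact Real.sqrt_le_sqrt (by linarith)
  -- volume computation
  have himg : (fun y => c + L y) '' Metric.closedBall 0 b ⊆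
      Metric.closedBall (0 : EuclideanSpace ℝ (Fin n)) 1 ∩
        {y : EuclideanSpace ℝ (Fin n) |
          ‖y - EuclideanSpace.single (⟨0, by omega⟩ : Fin n) 1‖ ≤
            Real.sqrt (2 - 2 * Real.sqrt (1 - b ^ 2))} := by
    rintro _ ⟨y, hy, rfl⟩
    exact key y hy
  have hVpos : volume (Metric.closedBall (0 : EuclideanSpace ℝ (Fin n)) b) ≠ 0 :=
    (Metric.measure_closedBall_pos volume 0 hb0).ne'
  have hVtop : volume (Metric.closedBall (0 : EuclideanSpace ℝ (Fin n)) b) ≠ ⊤ :=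
    measure_closedBall_lt_top.ne
  have hvols : volume ((fun y => c + L y) '' Metric.closedBall 0 b)
      = ENNReal.ofReal (lam * θ^(n-1)) * volume (Metric.closedBall (0 : EuclideanSpace ℝ (Fin n)) b) := by
    have h1 : (fun y => c + L y) '' Metric.closedBall 0 b
        = (fun x => c + x) '' (L '' Metric.closedBall 0 b) := by
      rw [Set.image_image]
    rw [h1, Set.image_add_left, measure_preimage_add, Measure.addHaar_image_linearMap, hLdet,
      abs_of_pos (by positivity)]
  have hlt : b / (4*N) < lam * θ^(n-1) := by
    have hn1 : (1:ℕ) ≤ n := by omega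
    have hcast : ((n - 1 : ℕ) : ℝ) = N - 1 := by
      rw [hN, Nat.cast_sub hn1]; norm_num
    have hbern : 1 - (N-1)/(2*N) ≤ θ^(n-1) := by
      have hB := one_add_mul_le_pow (a := -(1/(2*N))) (by nlinarith) (n-1)
      rw [hcast] at hB
      calc 1 - (N-1)/(2*N) = 1 + (N-1) * (-(1/(2*N))) := by ring
        _ ≤ (1 + (-(1/(2*N))))^(n-1) := hB
        _ = θ^(n-1) := by rw [hθdef]; ring_nf
    have hstep : b/(4*N) < lam * (1 - (N-1)/(2*N)) := by
      have hdiff : lam * (1 - (N-1)/(2*N)) - b/(4*N) = b * (N-1)/(8*N^3) := by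
        rw [hlam, hθdef]; field_simp; ring
      have hpos : 0 < b * (N-1)/(8*N^3) :=
        div_pos (mul_pos hb0 (by linarith)) (by positivity)
      linarith
    calc b/(4*N) < lam * (1 - (N-1)/(2*N)) := hstep
      _ ≤ lam * θ^(n-1) := mul_le_mul_of_nonneg_left hbern hlampos.le
  calc ENNReal.ofReal (b / (4 * n)) * volume (Metric.closedBall (0 : EuclideanSpace ℝ (Fin n)) b)
      = ENNReal.ofReal (b / (4 * N)) * volume (Metric.closedBall (0 : EuclideanSpace ℝ (Fin n)) b) := by
        rw [hN]
    _ < ENNReal.ofReal (lam * θ^(n-1)) * volume (Metric.closedBall (0 : EuclideanSpace ℝ (Fin n)) b) := by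
        refine ENNReal.mul_lt_mul_left hVpos hVtop ?_
        exact (ENNReal.ofReal_lt_ofReal_iff (by positivity)).mpr hlt
    _ = volume ((fun y => c + L y) '' Metric.closedBall 0 b) := hvols.symm
    _ ≤ volume (Metric.closedBall (0 : EuclideanSpace ℝ (Fin n)) 1 ∩
        {y : EuclideanSpace ℝ (Fin n) |
          ‖y - EuclideanSpace.single (⟨0, by omega⟩ : Fin n) 1‖ ≤
            Real.sqrt (2 - 2 * Real.sqrt (1 - b ^ 2))}) := measure_mono himg
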